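/- arXiv:2501.15634 — 2 statements merged into one kernel-verified Lean document; each statement's English description precedes it below -/
import Mathlib

section
/- Flip probability bound: for every data record i with weight w_i > 0, the flip probability q_{N,i} = |{θ ∈ R_N(ε) : θ_i = 1}| / |R_N(ε)| satisfies 0 ≤ q_{N,i} ≤ 1/2. Moreover if w_i = 0 and N ≥ 1, then q_{N,i} = 1/2. -/
/-- Flip probability bounds: for positive weight, 0 ≤ q_{N,i} ≤ 1/2; for zero weight,
q_{N,i} = 1/2. -/
theorem flip_probability_bound (N : ℕ) (w : Fin N → ℝ)
    (hw : ∀ i, 0 ≤ w i ∧ w i ≤ 1) (ε : ℝ) (hε : 0 ≤ ε)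
    (R : Finset (Fin N → Bool))
    (hR : R = Finset.univ.filter
      (fun θ => ∑ j, (if θ j then w j else 0) ≤ (N : ℝ) * ε))
    (i : Fin N) :
    (0 < w i →
      0 ≤ ((R.filter (fun θ => θ i = true)).card : ℝ) / (R.card : ℝ) ∧
      ((R.filter (fun θ => θ i = true)).card : ℝ) / (R.card : ℝ) ≤ 1 / 2) ∧
    (w i = 0 →
      ((R.filter (fun θ => θ i = true)).card : ℝ) / (R.card : ℝ) = 1 / 2) := by
  classical
  set f : (Fin N → Bool) → ℝ := fun θ => ∑ j, (if θ j then w j else 0) with hf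
  have key : ∀ (θ : Fin N → Bool) (b : Bool),
      f (Function.update θ i b) = f θ
        + ((if b then w i else 0) - (if θ i then w i else 0)) := by
    intro θ b
    simp only [hf]
    rw [← Finset.add_sum_erase Finset.univ _ (Finset.mem_univ i),
        ← Finset.add_sum_erase Finset.univ (fun j => if θ j then w j else 0)
          (Finset.mem_univ i)]
    have hrest : ∑ x ∈ Finset.univ.erase i,
        (if Function.update θ i b x then w x else 0)
        = ∑ x ∈ Finset.univ.erase i, (if θ x then w x else 0) := by
      refine Finset.sum_congr rfl fun x hx => ?_
      rw [Function.update_of_ne (Finset.ne_of_mem_erase hx)]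
    rw [hrest, Function.update_self]
    ring
  -- membership in R characterization
  have hmem : ∀ θ, θ ∈ R ↔ f θ ≤ (N : ℝ) * ε := by
    intro θ; rw [hR]; simp [hf]
  -- A ≤ B
  set A := R.filter (fun θ => θ i = true) with hA
  set B := R.filter (fun θ => θ i = false) with hB
  have hAB : A.card ≤ B.card := by
    apply Finset.card_le_card_of_injOn (fun θ => Function.update θ i false)
    · intro θ hθ
      simp only [hA, Finset.mem_coe, Finset.mem_filter] at hθ
      simp only [hB, Finset.mem_coe, Finset.mem_filter]
      refine ⟨?_, by simp⟩
      rw [hmem] at hθ ⊢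
      have := key θ false
      rw [hθ.2] at this
      simp at this
      rw [this]
      have := (hw i).1
      linarith [hθ.1]
    · intro θ hθ θ' hθ' hEq
      simp only [hA, Finset.coe_filter, Set.mem_setOf_eq] at hθ hθ'
      funext j
      by_cases hj : j = i
      · subst hj; rw [hθ.2, hθ'.2]
      · simpa [Function.update_of_ne hj] using congrFun hEq j
  have hcard : A.card + B.card = R.card := by
    have hB' : B = R.filter (fun θ => ¬ (θ i = true)) := by
      rw [hB]
      apply Finset.filter_congr
      intro θ _
      cases h : θ i <;> simp [h]
    rw [hA, hB']
    exact Finset.card_filter_add_card_filter_not _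
  constructor
  · intro _
    constructor
    · positivity
    · rcases Nat.eq_zero_or_pos R.card with h0 | hpos
      · have : A ⊆ R := Finset.filter_subset _ _
        have hA0 : A.card = 0 := by
          have := Finset.card_le_card this
          omega
        rw [hA0, h0]
        norm_num
      · rw [div_le_div_iff₀ (by exact_mod_cast hpos) (by norm_num)]
        have h2 : 2 * A.card ≤ R.card := by omega
        have h2' : 2 * (A.card : ℝ) ≤ (R.card : ℝ) := by exact_mod_cast h2
        linarith
  · intro hwi
    -- reverse injection
    have hBA : B.card ≤ A.card := by
      apply Finset.card_le_card_of_injOn (fun θ => Function.update θ i true)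
      · intro θ hθ
        simp only [hB, Finset.mem_coe, Finset.mem_filter] at hθ
        simp only [hA, Finset.mem_coe, Finset.mem_filter]
        refine ⟨?_, by simp⟩
        rw [hmem] at hθ ⊢
        have := key θ true
        rw [hθ.2] at this
        simp [hwi] at this
        rw [this]
        exact hθ.1
      · intro θ hθ θ' hθ' hEq
        simp only [hB, Finset.coe_filter, Set.mem_setOf_eq] at hθ hθ'
        funext j
        by_cases hj : j = i
        · subst hj; rw [hθ.2, hθ'.2]
        · simpa [Function.update_of_ne hj] using congrFun hEq j
    have heq : A.card = B.card := le_antisymm hAB hBA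
    have hRne : (fun _ : Fin N => false) ∈ R := by
      rw [hmem]
      simp [hf]
      positivity
    have hRpos : 0 < R.card := Finset.card_pos.mpr ⟨_, hRne⟩
    have h2 : R.card = 2 * A.card := by omega
    have hApos : 0 < A.card := by omega
    rw [h2]
    push_cast
    rw [div_eq_iff (by positivity : (2 : ℝ) * (A.card : ℝ) ≠ 0)]
    ring
end

section
/- Monotonicity of flip probability in weight: if w_i ≤ w_j (and all other weights are equal in the sense that the multiset of remaining weights coincides), then q_{N,i} ≥ q_{N,j}; i.e., records with larger weight are flipped in at most as many models of the Rashomon set. -/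
/-- Monotonicity of flip probability in weight: a record with larger weight is flipped
in at most as many models of the Rashomon set. -/
theorem flip_probability_antitone_in_weight (N : ℕ) (w : Fin N → ℝ)
    (hw : ∀ k, 0 ≤ w k ∧ w k ≤ 1) (ε : ℝ) (hε : 0 ≤ ε)
    (R : Finset (Fin N → Bool))
    (hR : R = Finset.univ.filter
      (fun θ => ∑ k, (if θ k then w k else 0) ≤ (N : ℝ) * ε))
    (i j : Fin N) (hij : i ≠ j) (hwij : w i ≤ w j) :
    ((R.filter (fun θ => θ j = true)).card : ℝ) / (R.card : ℝ)
      ≤ ((R.filter (fun θ => θ i = true)).card : ℝ) / (R.card : ℝ) := by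
  have hji : j ≠ i := hij.symm
  set f : (Fin N → Bool) → (Fin N → Bool) :=
    fun θ k => if k = i then θ j else if k = j then θ i else θ k with hf
  have hff : ∀ θ, f (f θ) = θ := by
    intro θ; funext k
    by_cases hk : k = i
    · subst hk; simp [hf, hij, hji]
    · by_cases hk' : k = j
      · subst hk'; simp [hf, hij, hji]
      · simp [hf, hk, hk']
  -- sum splitting
  have hsplit : ∀ g : (Fin N) → ℝ,
      ∑ k, g k = g i + (g j + ∑ k ∈ (Finset.univ.erase i).erase j, g k) := by
    intro g
    rw [Finset.add_sum_erase _ g (by simp [hji]), Finset.add_sum_erase _ g (by simp)]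
  have hcard : (R.filter (fun θ => θ j = true)).card
      ≤ (R.filter (fun θ => θ i = true)).card := by
    apply Finset.card_le_card_of_injOn f
    · intro θ hθ
      simp only [Finset.mem_coe, Finset.mem_filter, hR, Finset.mem_univ, true_and] at hθ ⊢
      obtain ⟨hsum, hθj⟩ := hθ
      constructor
      · have hrest : ∑ k ∈ (Finset.univ.erase i).erase j,
            (if f θ k then w k else 0) = ∑ k ∈ (Finset.univ.erase i).erase j,
            (if θ k then w k else 0) := by
          apply Finset.sum_congr rfl
          intro k hk
          simp only [Finset.mem_erase] at hk
          simp [hf, hk.1, hk.2.1]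
        rw [hsplit (fun k => if f θ k then w k else 0)]
        rw [hsplit (fun k => if θ k then w k else 0)] at hsum
        simp only [hrest]
        have hfi : f θ i = θ j := by simp [hf]
        have hfj : f θ j = θ i := by simp [hf, hji]
        rw [hfi, hfj]
        have key : (if θ j = true then w i else 0) + (if θ i = true then w j else 0)
            ≤ (if θ i = true then w i else 0) + (if θ j = true then w j else 0) := by
          rw [hθj]; simp only [if_true]
          cases hθi : θ i <;> simp [(hw i).1, hwij]
        linarith
      · simp [hf, hθj]
    · intro a _ b _ hab
      have := congrArg f hab
      rwa [hff, hff] at this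
  rcases Nat.eq_zero_or_pos R.card with h0 | hpos
  · simp [h0]
  · have hc : (0:ℝ) < R.card := by exact_mod_cast hpos
    gcongr
end
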